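/- If F : A ‚Üí k-Mod satisfies (RM)^d, then F satisfies (AH)^d: for every i ‚Č• 0, the cross effect cr_d(őļ_d^i F) : őļ_d^i F ‚Üí ŌĄ_d őļ_d^i F is injective, where őļ_d denotes the cokernel-of-cross-effect functor. -/

import Mathlib

open CategoryTheory CategoryTheory.Limits

noncomputable section

variable {A : Type*} [Category A] [Preadditive A] [HasFiniteBiproducts A]
variable {D : Type*} [Category D] [Preadditive D]

/-- `t d : a ↦ a^{⊕(d+1)}` -/
@[simps] def tFun (A : Type*) [Category A] [Preadditive A] [HasFiniteBiproducts A] (d : ℕ) :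
    A ⥤ A where
  obj a := ⨁ (fun _ : Fin (d + 1) => a)
  map f := biproduct.map (fun _ => f)

/-- `u_I : id ⟶ t_d` -/
@[simps] def uNat (A : Type*) [Category A] [Preadditive A] [HasFiniteBiproducts A] (d : ℕ)
    (I : Finset (Fin (d + 1))) : 𝟭 A ⟶ tFun A d where
  app a := biproduct.lift (fun i => if i ∈ I then 𝟙 a else 0)
  naturality a b f := by
    refine biproduct.hom_ext _ _ fun j => ?_
    by_cases h : j ∈ I <;> simp [h, tFun]

/-- `p_I : t_d ⟶ id` -/
@[simps] def pNat (A : Type*) [Category A] [Preadditive A] [HasFiniteBiproducts A] (d : ℕ)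
    (I : Finset (Fin (d + 1))) : tFun A d ⟶ 𝟭 A where
  app a := biproduct.desc (fun i => if i ∈ I then 𝟙 a else 0)
  naturality a b f := by
    refine biproduct.hom_ext' _ _ fun j => ?_
    by_cases h : j ∈ I <;> simp [h, tFun]

/-- the cross effect `cr_d(F) : F ⟶ τ_d F` -/
@[simps] def crNat (d : ℕ) (F : A ⥤ D) : F ⟶ tFun A d ⋙ F where
  app a := ∑ I : Finset (Fin (d + 1)), (-1 : ℤ) ^ I.card • F.map ((uNat A d I).app a)
  naturality a b f := by
    simp only [Functor.comp_map, Preadditive.comp_sum, Preadditive.sum_comp,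
      Preadditive.comp_zsmul, Preadditive.zsmul_comp]
    refine Finset.sum_congr rfl (fun I _ => ?_)
    have h := (uNat A d I).naturality f
    simp only [Functor.id_map] at h
    rw [← F.map_comp, ← F.map_comp, h]

/-- the co-cross effect `cr_d^{op}(F) : τ_d F ⟶ F` -/
@[simps] def crOpNat (d : ℕ) (F : A ⥤ D) : tFun A d ⋙ F ⟶ F where
  app a := ∑ I : Finset (Fin (d + 1)), (-1 : ℤ) ^ I.card • F.map ((pNat A d I).app a)
  naturality a b f := by
    simp only [Functor.comp_map, Preadditive.comp_sum, Preadditive.sum_comp,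
      Preadditive.comp_zsmul, Preadditive.zsmul_comp]
    refine Finset.sum_congr rfl (fun I _ => ?_)
    have h := (pNat A d I).naturality f
    simp only [Functor.id_map] at h
    rw [← F.map_comp, ← F.map_comp, h]

/-- `F` is polynomial of degree at most `d`. -/
def PolyDeg (d : ℕ) (F : A ⥤ D) : Prop := crNat d F = 0

end

section M0

variable (B : Type*) [Category B] [Limits.HasZeroMorphisms B]

/-- `M₀(B)` : same objects as `B`, morphisms the zero morphisms and split monomorphisms. -/
def M0 := B

instance : Category (M0 B) where
  Hom a b := {f : (show B from a) ⟶ (show B from b) // f = 0 ∨ IsSplitMono f}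
  id a := ⟨𝟙 _, Or.inr inferInstance⟩
  comp {a b c} f g := ⟨f.1 ≫ g.1, by
    rcases f.2 with hf | hf
    · exact Or.inl (by rw [hf, Limits.zero_comp])
    · rcases g.2 with hg | hg
      · exact Or.inl (by rw [hg, Limits.comp_zero])
      · exact Or.inr (by haveI := hf; haveI := hg; infer_instance)⟩
  id_comp f := Subtype.ext (Category.id_comp f.1)
  comp_id f := Subtype.ext (Category.comp_id f.1)
  assoc f g h := Subtype.ext (Category.assoc f.1 g.1 h.1)

/-- the inclusion `M₀(B) ⥤ B`. -/
@[simps] def M0.incl : M0 B ⥤ B where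
  obj a := a
  map f := f.1

end M0

section Theta

variable {k : Type} [CommRing k] (B : Type*) [Category B] [Limits.HasZeroMorphisms B]

/-- `θ`, the restriction functor along `M₀(B) ⥤ B`. -/
def theta (k : Type) [CommRing k] : (B ⥤ ModuleCat k) ⥤ (M0 B ⥤ ModuleCat k) :=
  (Functor.whiskeringLeft (M0 B) B (ModuleCat k)).obj (M0.incl B)

end Theta

section RM

variable {k : Type} [CommRing k] {A : Type*} [Category A] [Preadditive A]
  [Limits.HasFiniteBiproducts A]

/-- condition `(RM)^d` : the restriction of the cross effect to `M₀(A)` is a split mono. -/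
def RM (d : ℕ) (F : A ⥤ ModuleCat k) : Prop :=
  ∃ r : (theta A k).obj (tFun A d ⋙ F) ⟶ (theta A k).obj F,
    (theta A k).map (crNat d F) ≫ r = 𝟙 _

end RM

noncomputable section

variable {k : Type} [CommRing k] {A : Type} [SmallCategory A] [Preadditive A]
  [Limits.HasFiniteBiproducts A]

/-- `κ_d F = coker(cr_d F)` in the abelian functor category. -/
def kappa (d : ℕ) (F : A ⥤ ModuleCat k) : A ⥤ ModuleCat k := cokernel (crNat d F)

section Aux

open CategoryTheory Limits

variable {k : Type} [CommRing k] {A : Type} [SmallCategory A] [Preadditive A]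
  [Limits.HasFiniteBiproducts A]

/-- swap of the two biproduct levels of `t (t a)` -/
noncomputable def swapMap (d : ℕ) (a : A) :
    (tFun A d).obj ((tFun A d).obj a) ⟶ (tFun A d).obj ((tFun A d).obj a) :=
  biproduct.matrix (fun j j' =>
    biproduct.π (fun _ : Fin (d+1) => a) j' ≫ biproduct.ι (fun _ : Fin (d+1) => a) j)

lemma swap_swap (d : ℕ) (a : A) : swapMap d a ≫ swapMap d a = 𝟙 _ := by
  dsimp [swapMap]
  apply biproduct.hom_ext; intro j'
  apply biproduct.hom_ext; intro i'
  apply biproduct.hom_ext'; intro j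
  apply biproduct.hom_ext'; intro i
  simp [biproduct.lift_eq, biproduct.desc_eq, Preadditive.sum_comp,
    Preadditive.comp_sum, biproduct.ι_π, biproduct.ι_π_assoc, ite_comp, comp_ite,
    Finset.sum_ite_eq, Finset.sum_ite_eq', tFun]

lemma swap_natural (d : ℕ) {a b : A} (f : a ⟶ b) :
    (tFun A d).map ((tFun A d).map f) ≫ swapMap d b
      = swapMap d a ≫ (tFun A d).map ((tFun A d).map f) := by
  dsimp [swapMap]
  apply biproduct.hom_ext; intro j'
  apply biproduct.hom_ext; intro i'
  apply biproduct.hom_ext'; intro j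
  apply biproduct.hom_ext'; intro i
  simp [biproduct.ι_π, biproduct.ι_π_assoc, tFun]
  erw [biproduct.ι_desc_assoc, biproduct.ι_desc_assoc]
  simp [biproduct.ι_π_assoc]
  split_ifs <;> simp <;> erw [biproduct.ι_π] <;> simp [*]

lemma u_swap (d : ℕ) (I : Finset (Fin (d+1))) (a : A) :
    (uNat A d I).app ((tFun A d).obj a) ≫ swapMap d a
      = (tFun A d).map ((uNat A d I).app a) := by
  dsimp [swapMap]
  apply biproduct.hom_ext; intro j'
  apply biproduct.hom_ext; intro i'
  apply biproduct.hom_ext'; intro i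
  simp [biproduct.lift_eq, biproduct.desc_eq, Preadditive.sum_comp,
    Preadditive.comp_sum, biproduct.ι_π, biproduct.ι_π_assoc, ite_comp, comp_ite,
    Finset.sum_ite_eq, Finset.sum_ite_eq', tFun]


lemma u_empty (d : ℕ) (a : A) : (uNat A d ∅).app a = 0 := by
  apply biproduct.hom_ext; intro j; simp [tFun]
  exact zero_comp.symm

/-- `u_I` as a morphism of `M₀(A)`. -/
def uM0 (d : ℕ) (I : Finset (Fin (d+1))) (a : A) :
    (show M0 A from a) ⟶ (show M0 A from (tFun A d).obj a) :=
  ⟨(uNat A d I).app a, by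
    rcases I.eq_empty_or_nonempty with h | ⟨i, hi⟩
    · exact Or.inl (by rw [h, u_empty])
    · exact Or.inr ⟨⟨⟨biproduct.π _ i, by simp [hi, tFun]⟩⟩⟩⟩

/-- `t` applied to a morphism of `M₀(A)`. -/
def tM0 (d : ℕ) {a b : M0 A} (f : a ⟶ b) :
    (show M0 A from (tFun A d).obj ((M0.incl A).obj a)) ⟶
      (show M0 A from (tFun A d).obj ((M0.incl A).obj b)) :=
  ⟨(tFun A d).map f.1, by
    rcases f.2 with h | h
    · refine Or.inl ?_
      rw [h]
      apply biproduct.hom_ext; intro j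
      simp [tFun]
      erw [biproduct.map_π, comp_zero, zero_comp]
    · refine Or.inr ?_
      haveI := h
      exact ⟨⟨⟨(tFun A d).map h.exists_splitMono.some.retraction, by
        erw [← Functor.map_comp, h.exists_splitMono.some.id, CategoryTheory.Functor.map_id]⟩⟩⟩⟩

variable {k : Type} [CommRing k]

/-- naturality of the cross effect in the functor variable -/
lemma crNat_natural (d : ℕ) {F G : A ⥤ ModuleCat k} (φ : F ⟶ G) :
    φ ≫ crNat d G = crNat d F ≫ Functor.whiskerLeft (tFun A d) φ := by
  refine NatTrans.ext (funext fun a => ?_)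
  simp only [NatTrans.comp_app, crNat_app, Functor.whiskerLeft_app]
  rw [Preadditive.comp_sum, Preadditive.sum_comp]
  refine Finset.sum_congr rfl fun I _ => ?_
  rw [Preadditive.comp_zsmul, Preadditive.zsmul_comp, φ.naturality]
  rfl

lemma crTau_app (d : ℕ) (F : A ⥤ ModuleCat k) (a : A) :
    (crNat d (tFun A d ⋙ F)).app a
      = (crNat d F).app ((tFun A d).obj a) ≫ F.map (swapMap d a) := by
  simp only [crNat_app, Functor.comp_obj, Functor.comp_map]
  rw [Preadditive.sum_comp]
  refine Finset.sum_congr rfl fun I _ => ?_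
  rw [Preadditive.zsmul_comp, ← F.map_comp, u_swap]

lemma rTau_nat_aux (d : ℕ) (F : A ⥤ ModuleCat k) {a b : A} (x : a ⟶ b)
    (ra : F.obj ((tFun A d).obj ((tFun A d).obj a)) ⟶ F.obj ((tFun A d).obj a))
    (rb : F.obj ((tFun A d).obj ((tFun A d).obj b)) ⟶ F.obj ((tFun A d).obj b))
    (h : F.map ((tFun A d).map ((tFun A d).map x)) ≫ rb = ra ≫ F.map ((tFun A d).map x)) :
    F.map ((tFun A d).map ((tFun A d).map x)) ≫ (F.map (swapMap d b) ≫ rb)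
      = (F.map (swapMap d a) ≫ ra) ≫ F.map ((tFun A d).map x) := by
  rw [← Category.assoc, ← F.map_comp, swap_natural, F.map_comp, Category.assoc, h, Category.assoc]

lemma rTau_retract_aux (d : ℕ) (F : A ⥤ ModuleCat k) {a : A}
    (ra : F.obj ((tFun A d).obj ((tFun A d).obj a)) ⟶ F.obj ((tFun A d).obj a))
    (h : (crNat d F).app ((tFun A d).obj a) ≫ ra = 𝟙 _) :
    (crNat d (tFun A d ⋙ F)).app a ≫ (F.map (swapMap d a) ≫ ra) = 𝟙 _ := by
  rw [crTau_app, Category.assoc, ← Category.assoc (F.map _), ← F.map_comp, swap_swap,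
    CategoryTheory.Functor.map_id, Category.id_comp]
  exact h

lemma rTau_compat_aux (d : ℕ) (F : A ⥤ ModuleCat k) {a : A}
    (ra : F.obj ((tFun A d).obj ((tFun A d).obj a)) ⟶ F.obj ((tFun A d).obj a))
    (r0 : F.obj ((tFun A d).obj a) ⟶ F.obj a)
    (h : ∀ I : Finset (Fin (d+1)),
      F.map ((tFun A d).map ((uNat A d I).app a)) ≫ ra = r0 ≫ F.map ((uNat A d I).app a)) :
    (crNat d F).app ((tFun A d).obj a) ≫ (F.map (swapMap d a) ≫ ra)
      = r0 ≫ (crNat d F).app a := by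
  rw [← Category.assoc, ← crTau_app]
  simp only [crNat_app, Functor.comp_obj, Functor.comp_map]
  rw [Preadditive.sum_comp, Preadditive.comp_sum]
  refine Finset.sum_congr rfl fun I _ => ?_
  rw [Preadditive.zsmul_comp, Preadditive.comp_zsmul, h I]

/-- transfer of the `(RM)` retraction to `τF` -/
noncomputable def rTau (d : ℕ) (F : A ⥤ ModuleCat k)
    (r : (theta A k).obj (tFun A d ⋙ F) ⟶ (theta A k).obj F) :
    (theta A k).obj (tFun A d ⋙ (tFun A d ⋙ F)) ⟶ (theta A k).obj (tFun A d ⋙ F) where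
  app a := F.map (swapMap d ((M0.incl A).obj a))
      ≫ r.app (show M0 A from (tFun A d).obj ((M0.incl A).obj a))
  naturality _ _ f :=
    rTau_nat_aux d F f.1 _ _ (r.naturality (tM0 d f))

lemma rTau_retract (d : ℕ) (F : A ⥤ ModuleCat k)
    (r : (theta A k).obj (tFun A d ⋙ F) ⟶ (theta A k).obj F)
    (hr : (theta A k).map (crNat d F) ≫ r = 𝟙 _) :
    (theta A k).map (crNat d (tFun A d ⋙ F)) ≫ rTau d F r = 𝟙 _ := by
  refine NatTrans.ext (funext fun a => ?_)
  exact rTau_retract_aux d F _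
    (congr_arg (fun η => η.app (show M0 A from (tFun A d).obj ((M0.incl A).obj a))) hr)

lemma rTau_compat (d : ℕ) (F : A ⥤ ModuleCat k)
    (r : (theta A k).obj (tFun A d ⋙ F) ⟶ (theta A k).obj F) :
    ((Functor.whiskeringLeft (M0 A) A (ModuleCat k)).obj (M0.incl A ⋙ tFun A d)).map (crNat d F)
        ≫ rTau d F r
      = r ≫ (theta A k).map (crNat d F) := by
  refine NatTrans.ext (funext fun a => ?_)
  exact rTau_compat_aux d F _ _
    (fun I => r.naturality (uM0 d I ((M0.incl A).obj a)))

lemma mono_app_of_RM {d : ℕ} {F : A ⥤ ModuleCat k} (hF : RM d F) (a : A) :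
    Mono ((crNat d F).app a) := by
  obtain ⟨r, hr⟩ := hF
  have h : (crNat d F).app a ≫ r.app (show M0 A from a) = 𝟙 _ :=
    congr_arg (fun η => η.app (show M0 A from a)) hr
  haveI : IsSplitMono ((crNat d F).app a) := ⟨⟨⟨r.app (show M0 A from a), h⟩⟩⟩
  infer_instance

lemma mono_of_RM {d : ℕ} {F : A ⥤ ModuleCat k} (hF : RM d F) : Mono (crNat d F) := by
  haveI : ∀ a : A, Mono ((crNat d F).app a) := mono_app_of_RM hF
  exact NatTrans.mono_of_mono_app _

lemma RM_kappa {d : ℕ} {F : A ⥤ ModuleCat k} (hF : RM d F) : RM d (kappa d F) := by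
  obtain ⟨r, hr⟩ := hF
  let W := (Functor.whiskeringLeft (M0 A) A (ModuleCat k)).obj (M0.incl A ⋙ tFun A d)
  let π : (tFun A d ⋙ F) ⟶ kappa d F := cokernel.π (crNat d F)
  have hc := isColimitOfHasCokernelOfPreservesColimit W (crNat d F)
  have hzero : (theta A k).map (crNat d F ≫ π) = 0 := by
    rw [show crNat d F ≫ π = 0 from cokernel.condition _]
    refine NatTrans.ext (funext fun a => ?_)
    rfl
  have hcond : W.map (crNat d F) ≫ (rTau d F r ≫ (theta A k).map π)
      = (0 : W.obj F ⟶ W.obj (tFun A d ⋙ F)) ≫ (rTau d F r ≫ (theta A k).map π) := by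
    rw [zero_comp]
    erw [← Category.assoc, rTau_compat, Category.assoc,
      ← Functor.map_comp, hzero, Limits.comp_zero]
  refine ⟨Cofork.IsColimit.desc hc (rTau d F r ≫ (theta A k).map π) hcond, ?_⟩
  haveI : Epi π := coequalizer.π_epi
  haveI : ∀ a : M0 A, Epi (((theta A k).map π).app a) := by
    intro a
    show Epi (π.app ((M0.incl A).obj a))
    infer_instance
  haveI : Epi ((theta A k).map π) := NatTrans.epi_of_epi_app _
  rw [← cancel_epi ((theta A k).map π)]
  have hπdesc : W.map π ≫ Cofork.IsColimit.desc hc (rTau d F r ≫ (theta A k).map π) hcond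
      = rTau d F r ≫ (theta A k).map π := by
    have := Cofork.IsColimit.π_desc' hc (rTau d F r ≫ (theta A k).map π) hcond
    exact this
  have hnat : (theta A k).map (π ≫ crNat d (kappa d F))
      = (theta A k).map (crNat d (tFun A d ⋙ F)) ≫ W.map π := by
    rw [crNat_natural d π, Functor.map_comp]
    rfl
  erw [← Category.assoc, ← Functor.map_comp, hnat, Category.assoc, hπdesc,
    ← Category.assoc, rTau_retract d F r hr, Category.id_comp]

end Aux

/-- `(RM)^d` implies `(AH)^d` : all cross effects of the iterated `κ_d` are injective. -/
theorem stmt10 (d : ℕ) (F : A ⥤ ModuleCat k) (hF : RM d F) :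
    ∀ i : ℕ, Mono (crNat d ((kappa (k := k) (A := A) d)^[i] F)) := by
  have key : ∀ (i : ℕ) (G : A ⥤ ModuleCat k), RM d G →
      Mono (crNat d ((kappa (k := k) (A := A) d)^[i] G)) := by
    intro i
    induction i with
    | zero => exact fun G hG => mono_of_RM hG
    | succ n ih =>
      intro G hG
      rw [Function.iterate_succ_apply]
      exact ih _ (RM_kappa hG)
  exact fun i => key i F hF

end
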